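/- Let V be a vertex type, E : V → V → Prop an edge relation, and p a prime path of (V, E) that is not closed, with last vertex w. Then for every vertex y with E w y, the vertex y occurs in p at some position other than the first position of p. -/

import Mathlib

/-- A (directed) path in the graph `(V, E)`: a nonempty list of vertices in which
consecutive vertices are related by the edge relation `E`. -/
def IsPath {V : Type*} (E : V → V → Prop) (l : List V) : Prop :=
  l ≠ [] ∧ l.Chain' E

/-- A simple path: a path in which no vertex occurs more than once,
except that the first and last vertices may coincide. -/
def IsSimplePath {V : Type*} (E : V → V → Prop) (l : List V) : Prop :=
  IsPath E l ∧ l.dropLast.Nodup ∧ l.tail.Nodup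

/-- A closed path: it has at least two vertices and its first and last vertices coincide. -/
def IsClosedPath {V : Type*} (l : List V) : Prop :=
  2 ≤ l.length ∧ l.head? = l.getLast?

/-- A prime path: a maximal simple path, i.e. a simple path that is not a proper
subpath (contiguous sublist) of any simple path. -/
def IsPrimePath {V : Type*} (E : V → V → Prop) (l : List V) : Prop :=
  IsSimplePath E l ∧ ∀ q : List V, IsSimplePath E q → l <:+: q → l = q

/-- If `p` is a non-closed prime path with last vertex `w`, then every
out-neighbor `y` of `w` occurs in `p` at some position other than the first one. -/
theorem primePath_succ_mem_tail {V : Type*} (E : V → V → Prop)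
    (p : List V) (w : V) (hp : IsPrimePath E p) (hnc : ¬ IsClosedPath p)
    (hw : p.getLast? = some w) (y : V) (hy : E w y) :
    y ∈ p.tail := by
  by_contra hmem
  obtain ⟨⟨⟨hne, hchain⟩, hdl, htl⟩, hmax⟩ := hp
  -- p is nodup
  obtain ⟨a, l, rfl⟩ := List.exists_cons_of_ne_nil hne
  have hpnodup : (a :: l).Nodup := by
    rcases eq_or_ne l [] with rfl | hl
    · simp
    · have hhl : a ≠ l.getLast hl := by
        intro h
        apply hnc
        have h1 := List.length_pos_iff.mpr hl
        constructor
        · simp only [List.length_cons]; omega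
        · rw [List.getLast?_eq_getLast (l := a :: l) (by simp), List.getLast_cons hl, ← h]
          simp
      rw [List.nodup_cons]
      refine ⟨?_, by simpa using htl⟩
      intro ha
      rw [← List.dropLast_append_getLast hl, List.mem_append] at ha
      rcases ha with ha | ha
      · have : (a :: l).dropLast.Nodup := hdl
        rw [List.dropLast_cons_of_ne_nil hl, List.nodup_cons] at this
        exact this.1 ha
      · exact hhl (by simpa using ha)
  have hq : IsSimplePath E ((a :: l) ++ [y]) := by
    refine ⟨⟨by simp, ?_⟩, ?_, ?_⟩
    · show List.IsChain E _; rw [List.isChain_append]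
      refine ⟨hchain, List.isChain_singleton y, ?_⟩
      intro x hx z hz
      rw [hw] at hx
      simp at hx hz
      subst hx; subst hz; exact hy
    · have hdq : ((a :: l) ++ [y]).dropLast = a :: l := by exact List.dropLast_concat
      rw [hdq]; exact hpnodup
    · have : ((a :: l) ++ [y]).tail = l ++ [y] := by simp
      rw [this, List.nodup_append]
      refine ⟨by simpa using htl, by simp, ?_⟩
      intro x hx b hxy hxb
      simp at hxy
      subst hxy
      subst hxb
      exact hmem hx
  have := hmax _ hq ⟨[], [y], by simp⟩
  simpa using congrArg List.length this
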